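/- For all u, z ∈ ℂ such that θ(u + (1+τ)/2) ≠ 0, θ(z + (1+τ)/2) ≠ 0, θ̄(u) ≠ 0 and θ̄(z) ≠ 0, the following identity of theta quotients holds: θ′((1+τ)/2) · θ(z + u + (1+τ)/2) / (θ(u + (1+τ)/2) · θ(z + (1+τ)/2)) = θ̄′(0) · θ̄(u+z) / (θ̄(u) · θ̄(z)) = σ(u, z). -/

import Mathlib

open Complex Matrix

noncomputable section

/-- The third Jacobi theta function `θ(z) = ∑_{m ∈ ℤ} exp(πiτm² + 2πimz)`. -/
def theta3 (τ z : ℂ) : ℂ :=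
  ∑' m : ℤ, Complex.exp (Real.pi * Complex.I * τ * (m : ℂ) ^ 2 +
    2 * Real.pi * Complex.I * (m : ℂ) * z)

/-- The first Jacobi theta function
`θ̄(z) = 2 exp(πiτ/4) ∑_{m ≥ 0} (−1)^m exp(πiτ m(m+1)) sin((2m+1)πz)`. -/
def theta1 (τ z : ℂ) : ℂ :=
  2 * Complex.exp (Real.pi * Complex.I * τ / 4) *
    ∑' m : ℕ, (-1 : ℂ) ^ m * Complex.exp (Real.pi * Complex.I * τ * (m : ℂ) * ((m : ℂ) + 1)) *
      Complex.sin ((2 * (m : ℂ) + 1) * Real.pi * z)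

/-- The Kronecker elliptic function `σ(u, z) = θ̄′(0) θ̄(u+z) / (θ̄(u) θ̄(z))`. -/
def sigmaK (τ u z : ℂ) : ℂ :=
  deriv (theta1 τ) 0 * theta1 τ (u + z) / (theta1 τ u * theta1 τ z)

local notation "π" => (Real.pi : ℂ)

lemma theta3_eq (τ z : ℂ) : theta3 τ z = jacobiTheta₂ z τ := by
  refine tsum_congr fun m => ?_
  rw [jacobiTheta₂_term]; congr 1; ring

lemma pair_eq (τ z : ℂ) (n : ℕ) :
    -I * cexp (π*I*τ/4 + π*I*z) * jacobiTheta₂_term (n:ℤ) (z+(1+τ)/2) τ +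
    -I * cexp (π*I*τ/4 + π*I*z) * jacobiTheta₂_term (-((n:ℤ)+1)) (z+(1+τ)/2) τ
    = 2 * cexp (π*I*τ/4) * ((-1:ℂ)^n * cexp (π*I*τ*(n:ℂ)*((n:ℂ)+1)) *
        Complex.sin ((2*(n:ℂ)+1)*π*z)) := by
  have h1 : ((-1:ℂ))^n = cexp ((n:ℂ)*(π*I)) := by
    rw [Complex.exp_nat_mul, Complex.exp_pi_mul_I]
  have hm1 : cexp (-((2*(n:ℂ)+1)*(π*I))) = -1 := by
    rw [Complex.exp_neg, show (2*(n:ℂ)+1) = ((2*n+1 : ℕ) : ℂ) by push_cast; ring,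
      Complex.exp_nat_mul, Complex.exp_pi_mul_I]
    simp [pow_succ, pow_mul]
  rw [jacobiTheta₂_term, jacobiTheta₂_term, Complex.sin, h1]
  rw [show -I * cexp (π*I*τ/4 + π*I*z) *
        cexp (2 * π * I * (Int.cast ((n:ℤ)) : ℂ) * (z+(1+τ)/2) + π * I * (Int.cast ((n:ℤ)) : ℂ) ^ 2 * τ)
      = -I * cexp ((π*I*τ/4 + (n:ℂ)*(π*I) + π*I*τ*(n:ℂ)*((n:ℂ)+1)) + ((2*(n:ℂ)+1)*π*z)*I) from by
    rw [mul_assoc, ← Complex.exp_add]; congr 1; push_cast; ring]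
  rw [show -I * cexp (π*I*τ/4 + π*I*z) *
        cexp (2 * π * I * (Int.cast (-((n:ℤ)+1)) : ℂ) * (z+(1+τ)/2) + π * I * (Int.cast (-((n:ℤ)+1)) : ℂ) ^ 2 * τ)
      = -I * (cexp ((π*I*τ/4 + (n:ℂ)*(π*I) + π*I*τ*(n:ℂ)*((n:ℂ)+1)) + (-((2*(n:ℂ)+1)*π*z))*I) *
          cexp (-((2*(n:ℂ)+1)*(π*I)))) from by
    rw [mul_assoc, ← Complex.exp_add, ← Complex.exp_add]; congr 1; push_cast; ring]
  rw [hm1]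
  rw [show (π*I*τ/4 + (n:ℂ)*(π*I) + π*I*τ*(n:ℂ)*((n:ℂ)+1)) + ((2*(n:ℂ)+1)*π*z)*I
      = (π*I*τ/4) + ((n:ℂ)*(π*I) + ((π*I*τ*(n:ℂ)*((n:ℂ)+1)) + ((2*(n:ℂ)+1)*π*z)*I)) from by ring,
    show (π*I*τ/4 + (n:ℂ)*(π*I) + π*I*τ*(n:ℂ)*((n:ℂ)+1)) + (-((2*(n:ℂ)+1)*π*z))*I
      = (π*I*τ/4) + ((n:ℂ)*(π*I) + ((π*I*τ*(n:ℂ)*((n:ℂ)+1)) + (-((2*(n:ℂ)+1)*π*z))*I)) from by ring]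
  simp only [Complex.exp_add]
  ring

lemma theta1_eq {τ : ℂ} (hτ : 0 < τ.im) (z : ℂ) :
    theta1 τ z = -I * cexp (π*I*τ/4 + π*I*z) * theta3 τ (z + (1+τ)/2) := by
  set c := (1+τ)/2
  set f : ℤ → ℂ := fun m => -I * cexp (π*I*τ/4 + π*I*z) * jacobiTheta₂_term m (z+c) τ with hf
  have hsum : Summable f :=
    Summable.mul_left _ ((summable_jacobiTheta₂_term_iff (z+c) τ).mpr hτ)
  have hs1 : Summable fun n : ℕ => f n := hsum.comp_injective fun a b h => by exact_mod_cast h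
  have hs2 : Summable fun n : ℕ => f (-((n:ℤ)+1)) := by
    refine hsum.comp_injective fun a b h => ?_
    simpa using h
  have h0 : ∑' m : ℤ, f m = -I * cexp (π*I*τ/4 + π*I*z) * theta3 τ (z + c) := by
    rw [theta3_eq, jacobiTheta₂, tsum_mul_left]
  rw [← h0, tsum_of_nat_of_neg_add_one hs1 hs2, ← Summable.tsum_add hs1 hs2]
  rw [theta1, ← tsum_mul_left]
  exact tsum_congr fun n => (pair_eq τ z n).symm

lemma theta3_half_zero {τ : ℂ} (hτ : 0 < τ.im) : theta3 τ ((1+τ)/2) = 0 := by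
  have h := theta1_eq hτ 0
  simp only [theta1] at h
  simp only [mul_zero, zero_mul, Complex.sin_zero, tsum_zero] at h
  rcases mul_eq_zero.mp h.symm with h' | h'
  · exact absurd h' (mul_ne_zero (neg_ne_zero.mpr Complex.I_ne_zero) (Complex.exp_ne_zero _))
  · rwa [zero_add] at h'

lemma deriv_theta3_half {τ : ℂ} (hτ : 0 < τ.im) :
    deriv (theta3 τ) ((1+τ)/2) = jacobiTheta₂' ((1+τ)/2) τ := by
  have h : theta3 τ = fun w => jacobiTheta₂ w τ := funext (theta3_eq τ)
  rw [h]
  exact (hasDerivAt_jacobiTheta₂_fst ((1+τ)/2) hτ).deriv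

lemma deriv_theta1_zero {τ : ℂ} (hτ : 0 < τ.im) :
    deriv (theta1 τ) 0 = -I * cexp (π*I*τ/4) * jacobiTheta₂' ((1+τ)/2) τ := by
  set c := (1+τ)/2 with hc
  have hfun : theta1 τ = fun w => -I * cexp (π*I*τ/4 + π*I*w) * jacobiTheta₂ (w + c) τ :=
    funext fun w => by rw [theta1_eq hτ w, theta3_eq]
  have h1 : HasDerivAt (fun w : ℂ => jacobiTheta₂ (w + c) τ) (jacobiTheta₂' (0 + c) τ * 1) 0 :=
    by have := (hasDerivAt_jacobiTheta₂_fst (0 + c) hτ).comp 0 ((hasDerivAt_id 0).add_const c); exact this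
  have h2 : HasDerivAt (fun w : ℂ => -I * cexp (π*I*τ/4 + π*I*w))
      (-I * (cexp (π*I*τ/4 + π*I*0) * (π*I*1))) 0 := by
    exact ((((hasDerivAt_id 0).const_mul (π*I)).const_add (π*I*τ/4)).cexp).const_mul (-I)
  have h3 : deriv (fun w : ℂ => -I * cexp (π*I*τ/4 + π*I*w) * jacobiTheta₂ (w + c) τ) 0 = _ :=
    (h2.mul h1).deriv
  rw [hfun, h3]
  have hz : jacobiTheta₂ (0 + c) τ = 0 := by
    rw [zero_add, ← theta3_eq, hc]; exact theta3_half_zero hτ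
  rw [hz]
  simp [mul_zero, zero_add]

/-- The identity of theta quotients expressing the Kronecker elliptic function
through the third Jacobi theta function. -/
theorem stmt10 (τ : ℂ) (hτ : 0 < τ.im) (u z : ℂ)
    (h1 : theta3 τ (u + (1 + τ) / 2) ≠ 0) (h2 : theta3 τ (z + (1 + τ) / 2) ≠ 0)
    (h3 : theta1 τ u ≠ 0) (h4 : theta1 τ z ≠ 0) :
    deriv (theta3 τ) ((1 + τ) / 2) * theta3 τ (z + u + (1 + τ) / 2) /
        (theta3 τ (u + (1 + τ) / 2) * theta3 τ (z + (1 + τ) / 2)) = sigmaK τ u z ∧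
      deriv (theta1 τ) 0 * theta1 τ (u + z) / (theta1 τ u * theta1 τ z) = sigmaK τ u z := by
  refine ⟨?_, rfl⟩
  rw [sigmaK, deriv_theta3_half hτ, deriv_theta1_zero hτ, theta1_eq hτ u, theta1_eq hτ z,
    theta1_eq hτ (u+z), show z + u + (1+τ)/2 = u + z + (1+τ)/2 by ring]
  have hE : cexp (π*I*τ/4) * cexp (π*I*τ/4 + π*I*(u+z))
      = cexp (π*I*τ/4 + π*I*u) * cexp (π*I*τ/4 + π*I*z) := by
    rw [← Complex.exp_add, ← Complex.exp_add]; congr 1; ring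
  have hd : (-I * cexp (π*I*τ/4 + π*I*u) * theta3 τ (u + (1+τ)/2)) *
      (-I * cexp (π*I*τ/4 + π*I*z) * theta3 τ (z + (1+τ)/2)) ≠ 0 := by
    refine mul_ne_zero (mul_ne_zero (mul_ne_zero ?_ (Complex.exp_ne_zero _)) h1)
      (mul_ne_zero (mul_ne_zero ?_ (Complex.exp_ne_zero _)) h2) <;>
    exact neg_ne_zero.mpr Complex.I_ne_zero
  rw [div_eq_div_iff (mul_ne_zero h1 h2) hd]
  linear_combination (-(jacobiTheta₂' ((1+τ)/2) τ * theta3 τ (u + z + (1+τ)/2) *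
      theta3 τ (u + (1+τ)/2) * theta3 τ (z + (1+τ)/2)) * I * I) * hE
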